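/- Let μ_m, p_m for m = 0, 1, …, M satisfy 0 < μ_m < 1, 0 < p_m < 1, with μ_0 = 1 − Σ_{m=1}^M μ_m and p_0 = 1 − Σ_{m=1}^M p_m, and suppose 0 < μ_m < p_m < 1 for each 1 ≤ m ≤ M. Then for any N ∈ ℕ, ∏_{m=0}^{M} (μ_m/p_m)^{p_m N} ≤ exp(−2N Σ_{m=1}^{M} (p_m − μ_m)²). -/

import Mathlib

open Finset

lemma binary_pinsker {u v : ℝ} (hu : 0 < u) (huv : u < v) (hv : v < 1) :
    v * Real.log (u / v) + (1 - v) * Real.log ((1 - u) / (1 - v)) ≤ -2 * (v - u) ^ 2 := by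
  have hv0 : 0 < v := hu.trans huv
  have hu1 : u < 1 := huv.trans hv
  set f : ℝ → ℝ := fun x => v * Real.log x + (1 - v) * Real.log (1 - x) + 2 * (v - x) ^ 2 with hf
  have hderiv : ∀ x ∈ Set.Icc u v, HasDerivAt f
      (v * x⁻¹ + (1 - v) * ((1 - x)⁻¹ * (-1)) + 2 * (2 * (v - x) ^ 1 * (-1))) x := by
    intro x hx
    have hx0 : 0 < x := lt_of_lt_of_le hu hx.1
    have hx1 : x < 1 := lt_of_le_of_lt hx.2 hv
    have h1 : HasDerivAt (fun x : ℝ => v * Real.log x) (v * x⁻¹) x :=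
      (Real.hasDerivAt_log hx0.ne').const_mul v
    have hin : HasDerivAt (fun x : ℝ => 1 - x) (-1) x := (hasDerivAt_id x).const_sub 1
    have h2 : HasDerivAt (fun x : ℝ => Real.log (1 - x)) ((1 - x)⁻¹ * (-1)) x :=
      (Real.hasDerivAt_log (by linarith : (1 : ℝ) - x ≠ 0)).comp x hin
    have hin2 : HasDerivAt (fun x : ℝ => v - x) (-1) x := (hasDerivAt_id x).const_sub v
    have h3 : HasDerivAt (fun x : ℝ => (v - x) ^ 2) (2 * (v - x) ^ 1 * (-1)) x := by
      simpa using hin2.fun_pow 2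
    exact (h1.add (h2.const_mul (1 - v))).add (h3.const_mul 2)
  have hdiff : DifferentiableOn ℝ f (Set.Icc u v) := fun x hx =>
    ((hderiv x hx).differentiableAt).differentiableWithinAt
  have mono : MonotoneOn f (Set.Icc u v) := by
    apply monotoneOn_of_deriv_nonneg (convex_Icc u v) hdiff.continuousOn
    · rw [interior_Icc]
      exact fun x hx => (hdiff x (Set.mem_Icc_of_Ioo hx)).differentiableAt
        (Icc_mem_nhds hx.1 hx.2) |>.differentiableWithinAt
    · intro x hx
      rw [interior_Icc] at hx
      have hx0 : 0 < x := hu.trans hx.1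
      have hx1 : x < 1 := hx.2.trans hv
      rw [((hderiv x (Set.mem_Icc_of_Ioo hx)).deriv)]
      have hq : x * (1 - x) ≤ 1 / 4 := by nlinarith [sq_nonneg (x - 1 / 2)]
      have hpos : 0 < x * (1 - x) := by nlinarith
      have h4 : (4 : ℝ) ≤ (x * (1 - x))⁻¹ := by
        rw [le_inv_comm₀ (by norm_num) hpos]; linarith
      have hne1 : x ≠ 0 := hx0.ne'
      have hne2 : (1 : ℝ) - x ≠ 0 := by linarith
      have hrw : v * x⁻¹ + (1 - v) * ((1 - x)⁻¹ * (-1)) = (v - x) * (x * (1 - x))⁻¹ := by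
        rw [mul_inv]
        field_simp
        ring
      have hvx : 0 ≤ v - x := by linarith [hx.2]
      nlinarith [mul_le_mul_of_nonneg_left h4 hvx]
  have hfle : f u ≤ f v := mono ⟨le_refl u, huv.le⟩ ⟨huv.le, le_refl v⟩ huv.le
  have e1 : Real.log (u / v) = Real.log u - Real.log v := Real.log_div hu.ne' hv0.ne'
  have e2 : Real.log ((1 - u) / (1 - v)) = Real.log (1 - u) - Real.log (1 - v) :=
    Real.log_div (by linarith) (by linarith)
  simp only [hf] at hfle
  rw [e1, e2]
  nlinarith [hfle]

theorem multinomial_prod_bound (M N : ℕ) (hM : 1 ≤ M) (hN : 1 ≤ N)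
    (μ p : ℕ → ℝ)
    (hμpos : ∀ m ≤ M, 0 < μ m) (hμlt : ∀ m ≤ M, μ m < 1)
    (hppos : ∀ m ≤ M, 0 < p m) (hplt : ∀ m ≤ M, p m < 1)
    (hμ0 : μ 0 = 1 - ∑ m ∈ Icc 1 M, μ m)
    (hp0 : p 0 = 1 - ∑ m ∈ Icc 1 M, p m)
    (hμp : ∀ m, 1 ≤ m → m ≤ M → μ m < p m) :
    ∏ m ∈ range (M + 1), (μ m / p m) ^ (p m * N)
      ≤ Real.exp (-2 * N * ∑ m ∈ Icc 1 M, (p m - μ m) ^ 2) := by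
  set P : ℝ := ∑ m ∈ Icc 1 M, p m with hP
  set U : ℝ := ∑ m ∈ Icc 1 M, μ m with hU
  have hne : (Icc 1 M).Nonempty := ⟨1, by simp [hM]⟩
  have hmem : ∀ m ∈ Icc 1 M, 1 ≤ m ∧ m ≤ M := by
    intro m hm; exact mem_Icc.mp hm
  have hU0 : 0 < U := Finset.sum_pos (fun m hm => hμpos m (hmem m hm).2) hne
  have hUP : U < P := Finset.sum_lt_sum_of_nonempty hne
    (fun m hm => hμp m (hmem m hm).1 (hmem m hm).2)
  have hP1 : P < 1 := by
    have := hppos 0 (Nat.zero_le M); rw [hp0] at this; linarith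
  -- Jensen step
  have hPpos : 0 < P := hU0.trans hUP
  have jensen : ∑ m ∈ Icc 1 M, p m * Real.log (μ m / p m) ≤ P * Real.log (U / P) := by
    have hcc : ConcaveOn ℝ (Set.Ioi 0) Real.log := strictConcaveOn_log_Ioi.concaveOn
    have key := hcc.le_map_sum (t := Icc 1 M) (w := fun m => p m / P)
      (p := fun m => μ m / p m)
      (fun m hm => div_nonneg (hppos m (hmem m hm).2).le hPpos.le)
      (by rw [← Finset.sum_div]; field_simp; exact hP.symm)
      (fun m hm => Set.mem_Ioi.mpr (div_pos (hμpos m (hmem m hm).2) (hppos m (hmem m hm).2)))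
    simp only [smul_eq_mul] at key
    have hsum : ∑ m ∈ Icc 1 M, p m / P * (μ m / p m) = U / P := by
      rw [hU, Finset.sum_div]
      apply Finset.sum_congr rfl
      intro m hm
      have := (hppos m (hmem m hm).2).ne'
      field_simp
    rw [hsum] at key
    calc ∑ m ∈ Icc 1 M, p m * Real.log (μ m / p m)
        = P * ∑ m ∈ Icc 1 M, p m / P * Real.log (μ m / p m) := by
          rw [Finset.mul_sum]
          apply Finset.sum_congr rfl
          intro m hm
          field_simp
      _ ≤ P * Real.log (U / P) := mul_le_mul_of_nonneg_left key hPpos.le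
  -- binary Pinsker
  have pinsker := binary_pinsker hU0 hUP hP1
  -- sum of squares bound
  have sq_bound : ∑ m ∈ Icc 1 M, (p m - μ m) ^ 2 ≤ (P - U) ^ 2 := by
    have hPU : P - U = ∑ m ∈ Icc 1 M, (p m - μ m) := by
      rw [hP, hU, ← Finset.sum_sub_distrib]
    rw [hPU, sq (∑ m ∈ Icc 1 M, (p m - μ m)), Finset.sum_mul]
    apply Finset.sum_le_sum
    intro m hm
    have h1 : 0 ≤ p m - μ m := by linarith [hμp m (hmem m hm).1 (hmem m hm).2]
    rw [sq]
    exact mul_le_mul_of_nonneg_left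
      (Finset.single_le_sum (f := fun m => p m - μ m)
        (fun i hi => sub_nonneg.mpr (hμp i (hmem i hi).1 (hmem i hi).2).le) hm) h1
  -- core sum inequality
  have core : ∑ m ∈ range (M + 1), p m * Real.log (μ m / p m)
      ≤ -2 * ∑ m ∈ Icc 1 M, (p m - μ m) ^ 2 := by
    have hsplit : range (M + 1) = insert 0 (Icc 1 M) := by
      ext x; simp [Nat.lt_succ_iff]; omega
    rw [hsplit, Finset.sum_insert (by simp)]
    have h0 : p 0 * Real.log (μ 0 / p 0) = (1 - P) * Real.log ((1 - U) / (1 - P)) := by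
      rw [hp0, hμ0]
    rw [h0]
    nlinarith [sq_bound, pinsker, jensen]
  -- assemble
  have hprod : ∏ m ∈ range (M + 1), (μ m / p m) ^ (p m * (N : ℝ))
      = Real.exp (∑ m ∈ range (M + 1), (p m * N) * Real.log (μ m / p m)) := by
    rw [Real.exp_sum]
    apply Finset.prod_congr rfl
    intro m hm
    have hm' : m ≤ M := Nat.lt_succ_iff.mp (mem_range.mp hm)
    rw [Real.rpow_def_of_pos (div_pos (hμpos m hm') (hppos m hm')), mul_comm]
  rw [hprod, Real.exp_le_exp]
  have hNpos : (0 : ℝ) < N := by exact_mod_cast hN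
  calc ∑ m ∈ range (M + 1), (p m * N) * Real.log (μ m / p m)
      = N * ∑ m ∈ range (M + 1), p m * Real.log (μ m / p m) := by
        rw [Finset.mul_sum]; apply Finset.sum_congr rfl; intro m _; ring
    _ ≤ N * (-2 * ∑ m ∈ Icc 1 M, (p m - μ m) ^ 2) :=
        mul_le_mul_of_nonneg_left core hNpos.le
    _ = -2 * N * ∑ m ∈ Icc 1 M, (p m - μ m) ^ 2 := by ring
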